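/- arXiv:2011.04470 — 2 statements merged into one kernel-verified Lean document; each statement's English description precedes it below -/
import Mathlib

section
/- For every c with 0 < c ≤ 1, the inequality 1 − (1 + √c)² + 2 log(1 + √c) + 2c > 0 holds; equivalently, 2c > F_c(1 + √c), where F_c(1 + √c) = (1 + √c)² − 1 − log((1 + √c)²). -/
noncomputable section

namespace Spiked

/-- `h(x) = x - 1 - log x`. -/
def hFun (x : ℝ) : ℝ := x - 1 - Real.log x

/-- `ψ_c(x) = x + c x/(x-1)`. -/
def psiFun (c x : ℝ) : ℝ := x + c * x / (x - 1)

/-- `F_c(x) = h(ψ_c(x))`. -/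
def Ffun (c x : ℝ) : ℝ := hFun (psiFun c x)

/-- `Q_c(x) = c · h(ψ_c(x)/c)`. -/
def Qfun (c x : ℝ) : ℝ := c * hFun (psiFun c x / c)

end Spiked

open Spiked

lemma aux_log_lower (s : ℝ) (hs : 0 < s) : s - s ^ 2 / 2 < Real.log (1 + s) := by
  set g : ℝ → ℝ := fun x => Real.log (1 + x) - x + x ^ 2 / 2 with hg
  have hderiv : ∀ x : ℝ, 0 < 1 + x →
      HasDerivAt g (1 / (1 + x) - 1 + x) x := by
    intro x hx
    have h1 : HasDerivAt (fun y : ℝ => 1 + y) 1 x := (hasDerivAt_id x).const_add 1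
    have h2 : HasDerivAt (fun y : ℝ => Real.log (1 + y)) (1 / (1 + x)) x := by
      simpa [one_div] using h1.log hx.ne'
    have h3 : HasDerivAt (fun y : ℝ => y ^ 2 / 2) x x := by
      simpa using ((hasDerivAt_pow 2 x).div_const 2)
    exact (h2.sub (hasDerivAt_id x)).add h3
  have hmono : StrictMonoOn g (Set.Ici (0 : ℝ)) := by
    apply strictMonoOn_of_deriv_pos (convex_Ici 0)
    · intro x hx
      exact ((hderiv x (by simp at hx; linarith)).continuousAt).continuousWithinAt
    · intro x hx
      rw [interior_Ici] at hx
      have hx' : 0 < x := hx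
      rw [(hderiv x (by linarith)).deriv]
      have h1 : (0:ℝ) < 1 + x := by linarith
      have key : 1 / (1 + x) - 1 + x = x ^ 2 / (1 + x) := by
        field_simp; ring
      rw [key]
      exact div_pos (pow_pos hx' 2) h1
  have := hmono (Set.self_mem_Ici) (Set.mem_Ici.mpr hs.le) hs
  simp only [hg] at this
  simp at this
  linarith

/-- For `0 < c ≤ 1`, `1 − (1+√c)² + 2 log(1+√c) + 2c > 0`; equivalently
`2c > F_c(1+√c) = (1+√c)² − 1 − log((1+√c)²)`. -/
theorem two_c_gt_F_at_threshold (c : ℝ) (hc : 0 < c) (hc1 : c ≤ 1) :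
    0 < 1 - (1 + Real.sqrt c) ^ 2 + 2 * Real.log (1 + Real.sqrt c) + 2 * c ∧
    Ffun c (1 + Real.sqrt c) < 2 * c ∧
    Ffun c (1 + Real.sqrt c)
      = (1 + Real.sqrt c) ^ 2 - 1 - Real.log ((1 + Real.sqrt c) ^ 2) := by
  set s := Real.sqrt c with hsdef
  have hs : 0 < s := Real.sqrt_pos.mpr hc
  have hs2 : s ^ 2 = c := Real.sq_sqrt hc.le
  have hlog := aux_log_lower s hs
  have hpos : 0 < 1 - (1 + s) ^ 2 + 2 * Real.log (1 + s) + 2 * c := by nlinarith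
  have hpsi : psiFun c (1 + s) = (1 + s) ^ 2 := by
    unfold psiFun
    field_simp
    have e : c / (1 + s - 1) = s := by
      rw [show (1:ℝ) + s - 1 = s by ring, ← hs2, pow_two, mul_div_assoc, div_self hs.ne', mul_one]
    nlinarith [e]
  have hF : Ffun c (1 + s) = (1 + s) ^ 2 - 1 - Real.log ((1 + s) ^ 2) := by
    unfold Ffun hFun
    rw [hpsi]
  refine ⟨hpos, ?_, hF⟩
  rw [hF, Real.log_pow]
  push_cast
  linarith
end
end

section
/- For every c > 1, the inequality 1 − (1 + √c)²/c + log((1 + √c)²/c) + 2/c > 0 holds; equivalently, 2 > Q_c(1 + √c), where Q_c(1 + √c) = c·h((1 + √c)²/c). -/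
noncomputable section

open Spiked

lemma aux_f_pos {t : ℝ} (ht : 0 < t) :
    0 < t ^ 2 - 2 * t + 2 * Real.log (1 + t) := by
  set f : ℝ → ℝ := fun t => t ^ 2 - 2 * t + 2 * Real.log (1 + t) with hf
  have hmono : StrictMonoOn f (Set.Ici (0 : ℝ)) := by
    apply strictMonoOn_of_deriv_pos (convex_Ici 0)
    · apply ContinuousOn.add
      · fun_prop
      · apply ContinuousOn.mul continuousOn_const
        apply ContinuousOn.log (by fun_prop)
        intro x hx
        have : (0:ℝ) ≤ x := hx
        nlinarith
    · intro x hx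
      rw [interior_Ici] at hx
      have hx0 : (0:ℝ) < x := hx
      have h1 : (0:ℝ) < 1 + x := by linarith
      have hd : HasDerivAt f (2 * x ^ 1 - 2 * 1 + 2 * (1 / (1 + x))) x := by
        have hlog : HasDerivAt (fun y : ℝ => Real.log (1 + y)) (1 / (1 + x)) x := by
          have : HasDerivAt (fun y : ℝ => 1 + y) 1 x := (hasDerivAt_id x).const_add 1
          simpa using this.log (ne_of_gt h1)
        have hp : HasDerivAt (fun y : ℝ => y ^ 2) ((2:ℕ) * x ^ 1) x := hasDerivAt_pow 2 x
        have hl : HasDerivAt (fun y : ℝ => 2 * y) (2 * 1) x := (hasDerivAt_id x).const_mul 2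
        have H := (hp.sub hl).add (hlog.const_mul 2)
        exact H.congr_deriv (by push_cast; ring)
      rw [hd.deriv]
      have : 2 * x ^ 1 - 2 * 1 + 2 * (1 / (1 + x)) = 2 * x ^ 2 / (1 + x) := by
        field_simp; ring
      rw [this]; positivity
  have h0 : f 0 = 0 := by simp [hf]
  have := hmono (Set.self_mem_Ici) (Set.mem_Ici.2 ht.le) ht
  simpa [h0] using this

/-- For every `c > 1`, `1 − (1+√c)²/c + log((1+√c)²/c) + 2/c > 0`;
equivalently `2 > Q_c(1+√c) = c·h((1+√c)²/c)`. -/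
theorem two_gt_Q_at_threshold (c : ℝ) (hc : 1 < c) :
    0 < 1 - (1 + Real.sqrt c) ^ 2 / c + Real.log ((1 + Real.sqrt c) ^ 2 / c) + 2 / c ∧
    Qfun c (1 + Real.sqrt c) < 2 ∧
    Qfun c (1 + Real.sqrt c) = c * hFun ((1 + Real.sqrt c) ^ 2 / c) := by
  have hc0 : (0:ℝ) < c := by linarith
  set s := Real.sqrt c with hs
  have hs1 : 1 < s := by
    rw [hs, show (1:ℝ) = Real.sqrt 1 by simp]
    exact Real.sqrt_lt_sqrt zero_le_one hc
  have hs0 : 0 < s := by linarith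
  have hsq : s ^ 2 = c := Real.sq_sqrt hc0.le
  -- key positivity with t = 1/s
  have ht : 0 < (1:ℝ)/s := by positivity
  have hfpos := aux_f_pos ht
  -- rewrite log(1 + 1/s)
  have hlog1 : Real.log (1 + 1/s) = Real.log (1 + s) - Real.log s := by
    rw [show (1:ℝ) + 1/s = (1+s)/s by field_simp; ring]
    exact Real.log_div (by positivity) (ne_of_gt hs0)
  -- express the main quantity
  have hlog2 : Real.log ((1 + s) ^ 2 / c) = 2 * Real.log (1 + s) - 2 * Real.log s := by
    rw [Real.log_div (by positivity) (ne_of_gt hc0), ← hsq, Real.log_pow, Real.log_pow]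
    push_cast; ring
  have key : 0 < 1 - (1 + s) ^ 2 / c + Real.log ((1 + s) ^ 2 / c) + 2 / c := by
    rw [hlog2]
    rw [hlog1] at hfpos
    have hE : 1 - (1 + s) ^ 2 / c + (2 * Real.log (1 + s) - 2 * Real.log s) + 2 / c
        = (1/s) ^ 2 - 2 * (1/s) + 2 * (Real.log (1 + s) - Real.log s) := by
      rw [← hsq]; field_simp; ring
    rw [hE]; exact hfpos
  -- psi value
  have hpsi : psiFun c (1 + s) = (1 + s) ^ 2 := by
    rw [psiFun, ← hsq]
    have hss : s ^ 2 * ((1 + s) / (1 + s - 1)) = s * (1 + s) := by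
      rw [add_sub_cancel_left, mul_div_assoc', div_eq_iff hs0.ne']; ring
    rw [mul_div_assoc, hss]
    ring
  have hQ : Qfun c (1 + s) = c * hFun ((1 + s) ^ 2 / c) := by
    rw [Qfun, hpsi]
  refine ⟨key, ?_, hQ⟩
  rw [hQ, hFun]
  have h2 : c * (1 - (1 + s) ^ 2 / c + Real.log ((1 + s) ^ 2 / c) + 2 / c)
      = 2 - c * ((1 + s) ^ 2 / c - 1 - Real.log ((1 + s) ^ 2 / c)) := by
    field_simp; ring
  linarith [mul_pos hc0 key, h2]
end
end
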